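/- For every x∈I₁ with ϱ(x)≠0, every α,β ∈ (ν,∞) with α<β, and every κ with 0<|κ|<δ₂, there is a constant C_{x,α,β}>0, independent of ε, such that sup_{α<ξ<β} |g_x(ξ−iε)| ≤ C_{x,α,β} holds for all sufficiently small ε>0. -/

import Mathlib

open MeasureTheory Set Filter

/-- Existence of the principal value `P.V. ∫_ν^∞ v(y,z)/(y+z−ξ) dz = L`. -/
def HasPrincipalValue (v : ℝ → ℝ → ℝ) (ν y ξ L : ℝ) : Prop :=
  Tendsto (fun ε : ℝ =>
      (∫ z in Ioo ν (ξ - y - ε), v y z / (y + z - ξ)) +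
        ∫ z in Ioi (ξ - y + ε), v y z / (y + z - ξ))
    (nhdsWithin 0 (Ioi 0)) (nhds L)

/-- `G(y,ζ) = ∫_ν^∞ v(y,z)/(y+z−ζ) dz`. -/
noncomputable def bandG (v : ℝ → ℝ → ℝ) (ν y : ℝ) (ζ : ℂ) : ℂ :=
  ∫ z in Ioi ν, (v y z : ℂ) / (y + z - ζ)

/-- The half-line `(−∞, c]` viewed as a subset of `ℂ`. -/
def slitSet (c : ℝ) : Set ℂ := {ζ : ℂ | ζ.im = 0 ∧ ζ.re ≤ c}

/-- The open box `(x−Δ, x+Δ) + i(−Δ, Δ)` in `ℂ`. -/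
def cBox (x Δ : ℝ) : Set ℂ :=
  {ζ : ℂ | x - Δ < ζ.re ∧ ζ.re < x + Δ ∧ -Δ < ζ.im ∧ ζ.im < Δ}

/-- `D±(x,κ,ζ) = x − ζ − κ²ϱ(x)·𝒢(u⁻¹(x),ζ)` for a continuation `𝒢` of `G`. -/
noncomputable def Dfun (ρ uinv : ℝ → ℝ) (GG : ℝ → ℂ → ℂ) (κ x : ℝ) (ζ : ℂ) : ℂ :=
  (x : ℂ) - ζ - (κ : ℂ) ^ 2 * (ρ x : ℂ) * GG (uinv x) ζ

/-- `g_x(ζ) = κ²ϱ(x)v(u⁻¹(x),ζ)/(D₊(x,κ,ζ+u⁻¹(x))·D₋(x,κ,ζ+u⁻¹(x)))`. -/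
noncomputable def gfun (ρ uinv : ℝ → ℝ) (GΩ GΩ' : ℝ → ℂ → ℂ) (vC : ℝ → ℂ → ℂ)
    (κ x : ℝ) (ζ : ℂ) : ℂ :=
  (κ : ℂ) ^ 2 * (ρ x : ℂ) * vC (uinv x) ζ /
    (Dfun ρ uinv GΩ κ x (ζ + (uinv x : ℂ)) * Dfun ρ uinv GΩ' κ x (ζ + (uinv x : ℂ)))

/-- The open sector `D_{ν,θ} = {ζ : Re ζ > ν, −θ < arg ζ < 0}`. -/
def sector (ν θ : ℝ) : Set ℂ := {ζ : ℂ | ν < ζ.re ∧ -θ < ζ.arg ∧ ζ.arg < 0}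

/-- Lemma VI.3: for `x ∈ I₁` with `ϱ(x) ≠ 0`, `ν < α < β` and
`0 < |κ| < δ₂` there is a constant `C_{x,α,β} > 0`, independent of `ε`, with
`sup_{α<ξ<β} |g_x(ξ−iε)| ≤ C_{x,α,β}` for all sufficiently small `ε > 0`. -/
theorem statement_15
    (ξ₀m ξ₀p ξ₁m ξ₁p ν C C₁ : ℝ)
    (hord : ξ₀m < ξ₀p ∧ ξ₀p < ξ₁m ∧ ξ₁m < ξ₁p) (hν : 0 ≤ ν) (hC : 0 < C) (hC₁ : 0 < C₁)
    (w₀ w₁ ω : ℝ → ℝ) (lam : ℝ → ℝ → ℂ)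
    (hw₀_pos : ∀ᵐ y, y ∈ Icc ξ₀m ξ₀p → 0 < w₀ y)
    (hw₁_pos : ∀ᵐ x, x ∈ Icc ξ₁m ξ₁p → 0 < w₁ x)
    (hw₀_int : IntegrableOn w₀ (Icc ξ₀m ξ₀p)) (hw₁_int : IntegrableOn w₁ (Icc ξ₁m ξ₁p))
    (hω_nonneg : ∀ᵐ z, z ∈ Ici ν → 0 ≤ ω z) (hω_int : IntegrableOn ω (Ici ν))
    -- (a1): `u : I₀ → I₁` is a bijective C¹-diffeomorphism, with inverse `uinv`
    (u uinv : ℝ → ℝ)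
    (hu_bij : BijOn u (Icc ξ₀m ξ₀p) (Icc ξ₁m ξ₁p))
    (hu_C1 : ContDiffOn ℝ 1 u (Icc ξ₀m ξ₀p))
    (huinv_C1 : ContDiffOn ℝ 1 uinv (Icc ξ₁m ξ₁p))
    (hu_inv : ∀ y ∈ Icc ξ₀m ξ₀p, uinv (u y) = y)
    (hinv_u : ∀ x ∈ Icc ξ₁m ξ₁p, u (uinv x) = x)
    (huinv_maps : MapsTo uinv (Icc ξ₁m ξ₁p) (Icc ξ₀m ξ₀p))
    (hu_deriv : ∀ y ∈ Icc ξ₀m ξ₀p, deriv u y ≠ 0)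
    -- (a2)
    (v : ℝ → ℝ → ℝ)
    (hv_def : ∀ y z, v y z = ‖lam y z‖ ^ 2 * ω z)
    (hlam_meas : Measurable fun p : ℝ × ℝ => lam p.1 p.2)
    (hv_int : ∀ y ∈ Icc ξ₀m ξ₀p, (∫ z in Ici ν, v y z) ≤ C)
    (hw : ∀ y ∈ Icc ξ₀m ξ₀p, w₀ y ≤ C₁ * |deriv u y| * w₁ (u y))
    -- the Radon–Nikodým factor `ϱ`
    (ρ : ℝ → ℝ)
    (hρ : ∀ x ∈ Icc ξ₁m ξ₁p, ρ x = w₀ (uinv x) / (|deriv u (uinv x)| * w₁ x))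
    -- (a3): holomorphic extension of `v(y,·)` and the open set `Ω`
    (vC : ℝ → ℂ → ℂ) (Ωv : ℝ → Set ℂ) (Ω : Set ℂ)
    (hΩv_open : ∀ y ∈ Icc ξ₀m ξ₀p, IsOpen (Ωv y))
    (hΩv_sup : ∀ y ∈ Icc ξ₀m ξ₀p, ∀ z ∈ Ioi ν, (z : ℂ) ∈ Ωv y)
    (hvC_holo : ∀ y ∈ Icc ξ₀m ξ₀p, DifferentiableOn ℂ (vC y) (Ωv y))
    (hvC_agree : ∀ y ∈ Icc ξ₀m ξ₀p, ∀ z ∈ Ioi ν, vC y (z : ℂ) = (v y z : ℂ))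
    (hΩ_open : IsOpen Ω)
    (hΩ_sup : ∀ ξ ∈ Ioi (ξ₀m + ν), (ξ : ℂ) ∈ Ω)
    (hΩ_sub : ∀ y ∈ Icc ξ₀m ξ₀p, ∀ ζ ∈ Ω, ζ - (y : ℂ) ∈ Ωv y)
    -- the analytic continuation `𝒢_Ω` of `G` across the cut, and the principal value `I`
    (Ipv : ℝ → ℝ → ℝ)
    (hIpv : ∀ y ∈ Icc ξ₀m ξ₀p, ∀ ξ : ℝ, y + ν < ξ → HasPrincipalValue v ν y ξ (Ipv y ξ))
    (GΩ : ℝ → ℂ → ℂ)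
    (hGΩ_holo : ∀ y ∈ Icc ξ₀m ξ₀p, DifferentiableOn ℂ (GΩ y) (Ω \ slitSet (y + ν)))
    (hGΩ_up : ∀ y ∈ Icc ξ₀m ξ₀p, ∀ ζ ∈ Ω, 0 < ζ.im → GΩ y ζ = bandG v ν y ζ)
    (hGΩ_real : ∀ y ∈ Icc ξ₀m ξ₀p, ∀ ξ : ℝ, y + ν < ξ → (ξ : ℂ) ∈ Ω →
      GΩ y (ξ : ℂ) = (Ipv y ξ : ℂ) + Real.pi * Complex.I * vC y ((ξ : ℂ) - y))
    (hGΩ_low : ∀ y ∈ Icc ξ₀m ξ₀p, ∀ ζ ∈ Ω, ζ.im < 0 →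
      GΩ y ζ = bandG v ν y ζ + 2 * Real.pi * Complex.I * vC y (ζ - y))
    -- (a4): joint continuity
    (hcont : ContinuousOn (fun p : ℝ × ℂ => (ρ p.1 : ℂ) * GΩ (uinv p.1) p.2)
      {p : ℝ × ℂ | p.1 ∈ Icc ξ₁m ξ₁p ∧ p.2 ∈ Ω \ slitSet (uinv p.1 + ν)})
    (hcont' : ContinuousOn (fun p : ℝ × ℂ => (ρ p.1 : ℂ) * deriv (GΩ (uinv p.1)) p.2)
      {p : ℝ × ℂ | p.1 ∈ Icc ξ₁m ξ₁p ∧ p.2 ∈ Ω \ slitSet (uinv p.1 + ν)})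
    -- (a5)
    (ha5 : ∀ x ∈ Icc ξ₁m ξ₁p, uinv x + ν < x)
    -- regularity of `v` and (a6), (a7)
    (hv_intOn : ∀ y ∈ Icc ξ₀m ξ₀p, IntegrableOn (v y) (Ici ν))
    (hv_diff : ∀ y ∈ Icc ξ₀m ξ₀p, ∀ z ∈ Ioi ν, DifferentiableAt ℝ (v y) z)
    (C₂ C₃ : ℝ) (hC₂ : 0 < C₂) (hC₃ : 0 < C₃)
    (ha6 : ∀ y ∈ Icc ξ₀m ξ₀p, ∀ z ∈ Ici ν, v y z ≤ C₂)
    (ha6' : ∀ y ∈ Icc ξ₀m ξ₀p, ∀ z ∈ Ici ν, |deriv (v y) z| ≤ C₃)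
    (ha7 : ∀ y ∈ Icc ξ₀m ξ₀p, v y ν = 0)
    -- (a8)
    (N : Set ℝ) (hN_sub : N ⊆ Icc ξ₁m ξ₁p) (hN_null : MeasureTheory.volume N = 0)
    (ν₁ : ℝ) (hν₁_pos : 0 < ν₁)
    (hν₁_gt : ∀ x ∈ Icc ξ₁m ξ₁p, x - uinv x - ν < ν₁)
    (ha8 : ∀ x ∈ Icc ξ₁m ξ₁p \ N, ∀ ξ ∈ Ioo ν (ν + ν₁), 0 < ρ x * v (uinv x) ξ)
    -- `𝒢^Ω`, the continuation of `G` from the lower half-plane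
    (GΩ' : ℝ → ℂ → ℂ)
    (hGΩ'_holo : ∀ y ∈ Icc ξ₀m ξ₀p, DifferentiableOn ℂ (GΩ' y) (Ω \ slitSet (y + ν)))
    (hGΩ'_up : ∀ y ∈ Icc ξ₀m ξ₀p, ∀ ζ ∈ Ω, 0 < ζ.im →
      GΩ' y ζ = bandG v ν y ζ - 2 * Real.pi * Complex.I * vC y (ζ - y))
    (hGΩ'_real : ∀ y ∈ Icc ξ₀m ξ₀p, ∀ ξ : ℝ, y + ν < ξ → (ξ : ℂ) ∈ Ω →
      GΩ' y (ξ : ℂ) = (Ipv y ξ : ℂ) - Real.pi * Complex.I * vC y ((ξ : ℂ) - y))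
    (hGΩ'_low : ∀ y ∈ Icc ξ₀m ξ₀p, ∀ ζ ∈ Ω, ζ.im < 0 → GΩ' y ζ = bandG v ν y ζ)
    -- the coupling bound `δ₂` from the time-evolution theorem
    (δ₂ : ℝ) (hδ₂ : 0 < δ₂)
    -- (a10): the closed sector lies in `Ω(v) = ⋂_{y∈I₀}(Ω−y)`
    (θ₀ : ℝ) (hθ₀ : 0 < θ₀ ∧ θ₀ < Real.pi / 4)
    (ha10 : closure (sector ν θ₀) ⊆ {ζ : ℂ | ∀ y ∈ Icc ξ₀m ξ₀p, ζ + (y : ℂ) ∈ Ω})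
    -- (a11): strict positivity of `v`
    (ha11 : ∀ y ∈ Icc ξ₀m ξ₀p, ∀ ξ : ℝ, ν < ξ → 0 < v y ξ) :
    ∀ x ∈ Icc ξ₁m ξ₁p, ρ x ≠ 0 → ∀ α β : ℝ, ν < α → α < β →
      ∀ κ : ℝ, 0 < |κ| → |κ| < δ₂ →
        ∃ Cxαβ > (0 : ℝ), ∀ᶠ (ε : ℝ) in nhdsWithin (0 : ℝ) (Ioi 0),
          ∀ ξ ∈ Ioo α β,
            ‖gfun ρ uinv GΩ GΩ' vC κ x ((ξ : ℂ) - (ε : ℂ) * Complex.I)‖ ≤ Cxαβ := by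

  classical
  intro x hx hρx α β hνα hαβ κ hκ0 hκδ
  have hκne : κ ≠ 0 := by
    intro h; rw [h, abs_zero] at hκ0; exact lt_irrefl 0 hκ0
  set y := uinv x with hy_def
  have hy : y ∈ Icc ξ₀m ξ₀p := huinv_maps hx
  have hyξ₀m : ξ₀m ≤ y := hy.1
  -- the basic functions
  set Φp : ℂ → ℂ := fun ζ => Dfun ρ uinv GΩ κ x ζ with hΦpdef
  set Φm : ℂ → ℂ := fun ζ => Dfun ρ uinv GΩ' κ x ζ with hΦmdef
  set ψ : ℂ → ℂ := fun ζ => vC y (ζ - (y : ℂ)) with hψdef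
  -- the good open set
  have hslit_closed : IsClosed (slitSet (y + ν)) := by
    have : slitSet (y + ν) = (Complex.im ⁻¹' {0}) ∩ (Complex.re ⁻¹' Iic (y + ν)) := by
      ext ζ; simp [slitSet, Set.mem_setOf_eq]
    rw [this]
    exact (isClosed_singleton.preimage Complex.continuous_im).inter
      (isClosed_Iic.preimage Complex.continuous_re)
  set V : Set ℂ := (Ω \ slitSet (y + ν)) ∩ {ζ | ζ - (y : ℂ) ∈ Ωv y} with hVdef
  have hVopen : IsOpen V := by
    apply IsOpen.inter (hΩ_open.sdiff hslit_closed)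
    exact (hΩv_open y hy).preimage (continuous_id.sub continuous_const)
  have hVsub : V ⊆ Ω \ slitSet (y + ν) := inter_subset_left
  -- continuity on V
  have hΦp_cont : ContinuousOn Φp V := by
    apply ContinuousOn.sub (ContinuousOn.sub continuousOn_const continuousOn_id)
    exact continuousOn_const.mul (((hGΩ_holo y hy).continuousOn).mono hVsub)
  have hΦm_cont : ContinuousOn Φm V := by
    apply ContinuousOn.sub (ContinuousOn.sub continuousOn_const continuousOn_id)
    exact continuousOn_const.mul (((hGΩ'_holo y hy).continuousOn).mono hVsub)
  have hψ_cont : ContinuousOn ψ V := by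
    apply ((hvC_holo y hy).continuousOn).comp
      ((continuous_id.sub continuous_const).continuousOn)
    intro ζ hζ; exact hζ.2
  -- membership of real points in V and nonvanishing there
  have hreal : ∀ t ∈ Icc (α + y) (β + y),
      (t : ℂ) ∈ V ∧ Φp (t : ℂ) ≠ 0 ∧ Φm (t : ℂ) ≠ 0 := by
    intro t ht
    have hνt : ν + y < t := by
      have := ht.1; linarith
    have htΩ : (t : ℂ) ∈ Ω := hΩ_sup t (by
      simp only [mem_Ioi]; linarith)
    have htslit : (t : ℂ) ∉ slitSet (y + ν) := by
      rintro ⟨-, hle⟩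
      simp only [Complex.ofReal_re] at hle; linarith
    have hty : ν < t - y := by linarith
    have hcast : (t : ℂ) - (y : ℂ) = ((t - y : ℝ) : ℂ) := by push_cast; ring
    have htΩv : (t : ℂ) - (y : ℂ) ∈ Ωv y := by
      rw [hcast]; exact hΩv_sup y hy (t - y) hty
    have htV : (t : ℂ) ∈ V := ⟨⟨htΩ, htslit⟩, htΩv⟩
    have hvt : vC y ((t : ℂ) - y) = ((v y (t - y) : ℝ) : ℂ) := by
      rw [hcast]; exact hvC_agree y hy (t - y) hty
    have hvpos : 0 < v y (t - y) := ha11 y hy (t - y) hty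
    have hGp : GΩ y (t : ℂ) = (Ipv y t : ℂ) + Real.pi * Complex.I * vC y ((t : ℂ) - y) :=
      hGΩ_real y hy t (by linarith) htΩ
    have hGm : GΩ' y (t : ℂ) = (Ipv y t : ℂ) - Real.pi * Complex.I * vC y ((t : ℂ) - y) :=
      hGΩ'_real y hy t (by linarith) htΩ
    have hprod : κ ^ 2 * ρ x * (Real.pi * v y (t - y)) ≠ 0 := by
      apply mul_ne_zero (mul_ne_zero (pow_ne_zero 2 hκne) hρx)
      exact mul_ne_zero Real.pi_ne_zero (ne_of_gt hvpos)
    have himp : (Φp (t : ℂ)).im = -(κ ^ 2 * ρ x * (Real.pi * v y (t - y))) := by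
      simp only [hΦpdef, Dfun, ← hy_def, hGp, hvt]
      simp [← Complex.ofReal_pow, Complex.sub_im, Complex.add_im, Complex.mul_im,
        Complex.mul_re]
      try ring
    have himm : (Φm (t : ℂ)).im = κ ^ 2 * ρ x * (Real.pi * v y (t - y)) := by
      simp only [hΦmdef, Dfun, ← hy_def, hGm, hvt]
      simp [← Complex.ofReal_pow, Complex.sub_im, Complex.add_im, Complex.mul_im,
        Complex.mul_re]
      try ring
    refine ⟨htV, ?_, ?_⟩
    · intro h; rw [h] at himp
      simp only [Complex.zero_im] at himp
      exact hprod (by linarith [himp.symm] )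
    · intro h; rw [h] at himm
      simp only [Complex.zero_im] at himm
      exact hprod himm.symm
  -- the open set where denominators do not vanish
  set W : Set ℂ := {ζ ∈ V | Φp ζ ≠ 0 ∧ Φm ζ ≠ 0} with hWdef
  have hWopen : IsOpen W := by
    rw [isOpen_iff_mem_nhds]
    rintro ζ ⟨hζV, h1, h2⟩
    have hc1 : ContinuousAt Φp ζ := hΦp_cont.continuousAt (hVopen.mem_nhds hζV)
    have hc2 : ContinuousAt Φm ζ := hΦm_cont.continuousAt (hVopen.mem_nhds hζV)
    filter_upwards [hVopen.mem_nhds hζV, hc1.eventually_ne h1, hc2.eventually_ne h2]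
      with w hw h1' h2'
    exact ⟨hw, h1', h2'⟩
  -- the real segment
  set K : Set ℂ := (fun t : ℝ => (t : ℂ)) '' Icc (α + y) (β + y) with hKdef
  have hKcomp : IsCompact K := isCompact_Icc.image Complex.continuous_ofReal
  have hKW : K ⊆ W := by
    rintro ζ ⟨t, ht, rfl⟩
    obtain ⟨h1, h2, h3⟩ := hreal t ht
    exact ⟨h1, h2, h3⟩
  obtain ⟨δ, hδpos, hδsub⟩ := hKcomp.exists_thickening_subset_open hWopen hKW
  set ε₀ := δ / 2 with hε₀def
  have hε₀pos : 0 < ε₀ := by positivity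
  -- the closed strip
  set S : Set ℂ := (fun p : ℝ × ℝ => (p.1 : ℂ) + (p.2 : ℂ) * Complex.I) ''
    (Icc (α + y) (β + y) ×ˢ Icc (-ε₀) 0) with hSdef
  have hScomp : IsCompact S := by
    apply (isCompact_Icc.prod isCompact_Icc).image
    exact (Complex.continuous_ofReal.comp continuous_fst).add
      ((Complex.continuous_ofReal.comp continuous_snd).mul continuous_const)
  have hSW : S ⊆ W := by
    rintro ζ ⟨⟨a, b⟩, ⟨ha, hb⟩, rfl⟩
    apply hδsub
    rw [Metric.mem_thickening_iff]
    refine ⟨(a : ℂ), ⟨a, ha, rfl⟩, ?_⟩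
    have : ((a : ℂ) + (b : ℂ) * Complex.I) - (a : ℂ) = (b : ℂ) * Complex.I := by ring
    rw [Complex.dist_eq, this]
    simp only [norm_mul, Complex.norm_I, Complex.norm_real, Real.norm_eq_abs, mul_one]
    simp only [mem_Icc] at hb
    have : |b| ≤ ε₀ := abs_le.2 ⟨hb.1, by linarith [hb.2, hε₀pos.le]⟩
    linarith
  have hSV : S ⊆ V := fun ζ hζ => (hSW hζ).1
  have hSne : S.Nonempty := by
    refine ⟨((α + y : ℝ) : ℂ), ⟨(α + y, 0), ⟨?_, ?_⟩, by simp⟩⟩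
    · exact ⟨show α + y ≤ α + y from le_refl _, show α + y ≤ β + y by linarith⟩
    · exact ⟨show -ε₀ ≤ (0:ℝ) by linarith, le_refl 0⟩
  -- minima and maxima on S
  obtain ⟨ζ₁, hζ₁S, hmin1⟩ := hScomp.exists_isMinOn hSne (hΦp_cont.norm.mono hSV)
  obtain ⟨ζ₂, hζ₂S, hmin2⟩ := hScomp.exists_isMinOn hSne (hΦm_cont.norm.mono hSV)
  obtain ⟨ζ₃, hζ₃S, hmax⟩ := hScomp.exists_isMaxOn hSne (hψ_cont.norm.mono hSV)
  set c₁ := ‖Φp ζ₁‖ with hc₁def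
  set c₂ := ‖Φm ζ₂‖ with hc₂def
  set M := ‖ψ ζ₃‖ with hMdef
  have hc₁pos : 0 < c₁ := norm_pos_iff.2 (hSW hζ₁S).2.1
  have hc₂pos : 0 < c₂ := norm_pos_iff.2 (hSW hζ₂S).2.2
  have hMnn : 0 ≤ M := norm_nonneg _
  refine ⟨κ ^ 2 * |ρ x| * M / (c₁ * c₂) + 1, by positivity, ?_⟩
  filter_upwards [Ioo_mem_nhdsGT_of_mem (left_mem_Ico.2 hε₀pos)] with ε hε ξ hξ
  obtain ⟨hε1, hε2⟩ := hε
  obtain ⟨hξ1, hξ2⟩ := hξ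
  set ζ : ℂ := (ξ : ℂ) - (ε : ℂ) * Complex.I with hζdef
  have hζ'S : ζ + (y : ℂ) ∈ S := by
    refine ⟨(ξ + y, -ε), ⟨⟨show α + y ≤ ξ + y by linarith, show ξ + y ≤ β + y by linarith⟩,
      ⟨show -ε₀ ≤ -ε by linarith, show -ε ≤ (0:ℝ) by linarith⟩⟩, ?_⟩
    push_cast; ring
  have hζ'W := hSW hζ'S
  have hvCψ : vC (uinv x) ζ = ψ (ζ + (y : ℂ)) := by
    simp only [hψdef, ← hy_def, add_sub_cancel_right]
  have hnum : ‖(κ : ℂ) ^ 2 * (ρ x : ℂ) * vC (uinv x) ζ‖ ≤ κ ^ 2 * |ρ x| * M := by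
    rw [norm_mul, norm_mul, norm_pow, Complex.norm_real, Complex.norm_real,
      Real.norm_eq_abs, Real.norm_eq_abs, sq_abs, hvCψ]
    have h1 : ‖ψ (ζ + (y : ℂ))‖ ≤ M := hmax hζ'S
    have h2 : 0 ≤ κ ^ 2 * |ρ x| := by positivity
    exact mul_le_mul_of_nonneg_left h1 h2
  have hden : c₁ * c₂ ≤ ‖Φp (ζ + (y : ℂ)) * Φm (ζ + (y : ℂ))‖ := by
    rw [norm_mul]
    exact mul_le_mul (hmin1 hζ'S) (hmin2 hζ'S) hc₂pos.le (norm_nonneg _)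
  have hgval : gfun ρ uinv GΩ GΩ' vC κ x ζ =
      (κ : ℂ) ^ 2 * (ρ x : ℂ) * vC (uinv x) ζ /
        (Φp (ζ + (y : ℂ)) * Φm (ζ + (y : ℂ))) := by
    simp only [gfun, hΦpdef, hΦmdef, ← hy_def]
  rw [hgval, norm_div]
  have hle : ‖(κ : ℂ) ^ 2 * (ρ x : ℂ) * vC (uinv x) ζ‖ /
      ‖Φp (ζ + (y : ℂ)) * Φm (ζ + (y : ℂ))‖ ≤ κ ^ 2 * |ρ x| * M / (c₁ * c₂) :=
    div_le_div₀ (by positivity) hnum (by positivity) hden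
  linarith
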